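/- arXiv:1907.13392 — 3 statements merged into one kernel-verified Lean document; each statement's English description precedes it below -/
import Mathlib

section
/- Let H be a Hamiltonian on ℂ^D whose spectrum has non-degenerate gaps, with orthonormal eigenbasis |j⟩, and let A be an operator with ‖A‖ ≤ 1. For a unit vector |ψ⟩ with coefficients c_j = ⟨j|ψ⟩, the time-average fluctuation Δ = lim_{τ→∞}(1/τ)∫_0^τ |⟨ψ|A(t)|ψ⟩ - A^∞_ψ|² dt (where A(t) = e^{iHt}Ae^{-iHt} and A^∞_ψ = Σ_j |c_j|² A_{jj}) satisfies Δ ≤ Σ_j |c_j|⁴, i.e., Δ is bounded by the inverse effective dimension. -/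
open scoped Matrix
open Filter

/-- Cesàro average of a complex exponential. -/
lemma aux_cesaro_exp (ω : ℝ) :
    Tendsto (fun τ : ℝ => (τ : ℂ)⁻¹ * ∫ t in (0:ℝ)..τ, Complex.exp (Complex.I * ω * t))
      atTop (nhds (if ω = 0 then (1:ℂ) else 0)) := by
  by_cases hω : ω = 0
  · rw [if_pos hω]
    refine Tendsto.congr' ?_ tendsto_const_nhds
    filter_upwards [eventually_ge_atTop (1:ℝ)] with τ hτ
    have hτ0 : (τ:ℂ) ≠ 0 := by
      exact_mod_cast (by linarith : τ ≠ 0)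
    simp [hω, inv_mul_cancel₀ hτ0]
  · rw [if_neg hω]
    have hz : (Complex.I * (ω:ℂ)) ≠ 0 :=
      mul_ne_zero Complex.I_ne_zero (Complex.ofReal_ne_zero.2 hω)
    have hint : ∀ τ : ℝ, (∫ t in (0:ℝ)..τ, Complex.exp (Complex.I * ω * t))
        = (Complex.exp (Complex.I * ω * τ) - 1) / (Complex.I * ω) := by
      intro τ
      rw [integral_exp_mul_complex hz]
      norm_num
    have hnorm1 : ∀ τ : ℝ, ‖Complex.exp (Complex.I * ω * τ)‖ = 1 := by
      intro τ
      rw [Complex.norm_exp]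
      have : (Complex.I * ω * τ).re = 0 := by simp
      rw [this, Real.exp_zero]
    apply squeeze_zero_norm' (a := fun τ : ℝ => τ⁻¹ * (2 / ‖(Complex.I * (ω:ℂ))‖))
    · filter_upwards [eventually_ge_atTop (1:ℝ)] with τ hτ
      rw [hint τ, norm_mul, norm_div, norm_inv]
      have h2 : ‖Complex.exp (Complex.I * ω * τ) - 1‖ ≤ 2 := by
        calc ‖Complex.exp (Complex.I * ω * τ) - 1‖
            ≤ ‖Complex.exp (Complex.I * ω * τ)‖ + ‖(1:ℂ)‖ := norm_sub_le _ _
          _ ≤ 2 := by rw [hnorm1 τ]; norm_num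
      have hτn : ‖(τ:ℂ)‖ = τ := by
        rw [Complex.norm_real, Real.norm_eq_abs, abs_of_nonneg (by linarith)]
      rw [hτn]
      have hτ0 : (0:ℝ) ≤ τ⁻¹ := inv_nonneg.2 (by linarith)
      rw [div_eq_mul_inv, div_eq_mul_inv]
      have hzn : (0:ℝ) ≤ ‖Complex.I * (ω:ℂ)‖⁻¹ := inv_nonneg.2 (norm_nonneg _)
      gcongr
    · have := (tendsto_inv_atTop_zero (𝕜 := ℝ)).mul_const (2 / ‖(Complex.I * (ω:ℂ))‖)
      simpa using this

set_option synthInstance.maxHeartbeats 1000000 in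
set_option maxHeartbeats 1000000 in
/-- The squared row sums of a matrix are bounded by its squared operator norm. -/
lemma aux_row {D : ℕ} (M : Matrix (Fin D) (Fin D) ℂ)
    (hM : ‖Matrix.toEuclideanCLM (𝕜 := ℂ) M‖ ≤ 1) (j : Fin D) :
    ∑ k, Complex.normSq (M j k) ≤ 1 := by
  have h1 : (Matrix.toEuclideanCLM (𝕜 := ℂ) (star M)) (EuclideanSpace.single j 1)
      = (WithLp.equiv 2 _).symm ((star M).mulVec (Pi.single j 1)) := by
    rfl
  have h2 : ‖(Matrix.toEuclideanCLM (𝕜 := ℂ) (star M)) (EuclideanSpace.single j 1)‖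
      = Real.sqrt (∑ k, Complex.normSq (M j k)) := by
    rw [h1, EuclideanSpace.norm_eq]
    congr 1
    refine Finset.sum_congr rfl fun k _ => ?_
    have : ((WithLp.equiv 2 (Fin D → ℂ)).symm ((star M).mulVec (Pi.single j 1))) k
        = (star M).mulVec (Pi.single j 1) k := rfl
    rw [this, Matrix.mulVec_single]
    simp [Matrix.star_apply, Complex.normSq_eq_norm_sq]
  have h3 : ‖(Matrix.toEuclideanCLM (𝕜 := ℂ) (star M)) (EuclideanSpace.single j 1)‖ ≤ 1 := by
    calc ‖(Matrix.toEuclideanCLM (𝕜 := ℂ) (star M)) (EuclideanSpace.single j 1)‖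
        ≤ ‖(Matrix.toEuclideanCLM (𝕜 := ℂ) (star M))‖ * ‖EuclideanSpace.single j (1:ℂ)‖ :=
          ContinuousLinearMap.le_opNorm _ _
      _ ≤ 1 := by
          rw [map_star, ContinuousLinearMap.star_eq_adjoint, show ‖ContinuousLinearMap.adjoint (Matrix.toEuclideanCLM (𝕜 := ℂ) M)‖ = ‖Matrix.toEuclideanCLM (𝕜 := ℂ) M‖ from LinearIsometryEquiv.norm_map _ _, EuclideanSpace.norm_single, norm_one, mul_one]
          exact hM
  rw [h2] at h3
  have h4 : (0:ℝ) ≤ ∑ k, Complex.normSq (M j k) :=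
    Finset.sum_nonneg fun k _ => Complex.normSq_nonneg _
  nlinarith [Real.sq_sqrt h4, Real.sqrt_nonneg (∑ k, Complex.normSq (M j k))]

set_option synthInstance.maxHeartbeats 1000000 in
set_option maxHeartbeats 1000000 in
lemma aux_col {D : ℕ} (M : Matrix (Fin D) (Fin D) ℂ)
    (hM : ‖Matrix.toEuclideanCLM (𝕜 := ℂ) M‖ ≤ 1) (k : Fin D) :
    ∑ j, Complex.normSq (M j k) ≤ 1 := by
  have hsM : ‖Matrix.toEuclideanCLM (𝕜 := ℂ) (star M)‖ ≤ 1 := by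
    rw [map_star, ContinuousLinearMap.star_eq_adjoint,
      show ‖ContinuousLinearMap.adjoint (Matrix.toEuclideanCLM (𝕜 := ℂ) M)‖
        = ‖Matrix.toEuclideanCLM (𝕜 := ℂ) M‖ from LinearIsometryEquiv.norm_map _ _]
    exact hM
  have := aux_row (star M) hsM k
  calc ∑ j, Complex.normSq (M j k) = ∑ j, Complex.normSq ((star M) k j) := by
        refine Finset.sum_congr rfl fun j _ => ?_
        rw [Matrix.star_apply]; exact (Complex.normSq_conj _).symm
    _ ≤ 1 := this

set_option synthInstance.maxHeartbeats 1000000 in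
set_option maxHeartbeats 1000000 in
lemma aux_conj_norm {D : ℕ} (A V : Matrix (Fin D) (Fin D) ℂ)
    (hV1 : star V * V = 1) (hV2 : V * star V = 1)
    (hA : ‖Matrix.toEuclideanCLM (𝕜 := ℂ) A‖ ≤ 1) :
    ‖Matrix.toEuclideanCLM (𝕜 := ℂ) (star V * A * V)‖ ≤ 1 := by
  set u := Matrix.toEuclideanCLM (𝕜 := ℂ) V with hu_def
  set a := Matrix.toEuclideanCLM (𝕜 := ℂ) A with ha_def
  have hu : u ∈ unitary (EuclideanSpace ℂ (Fin D) →L[ℂ] EuclideanSpace ℂ (Fin D)) := by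
    constructor
    · rw [hu_def, ← map_star, ← map_mul, hV1, map_one]
    · rw [hu_def, ← map_star, ← map_mul, hV2, map_one]
  have heq : Matrix.toEuclideanCLM (𝕜 := ℂ) (star V * A * V) = star u * a * u := by
    rw [map_mul, map_mul, map_star]
  rw [heq]
  refine ContinuousLinearMap.opNorm_le_bound _ zero_le_one fun x => ?_
  have h1 : (star u * a * u) x = (star u) (a (u x)) := rfl
  rw [h1, ContinuousLinearMap.norm_map_of_mem_unitary (Unitary.star_mem hu)]
  calc ‖a (u x)‖ ≤ ‖a‖ * ‖u x‖ := a.le_opNorm _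
    _ = ‖a‖ * ‖x‖ := by rw [ContinuousLinearMap.norm_map_of_mem_unitary hu]
    _ ≤ 1 * ‖x‖ := mul_le_mul_of_nonneg_right hA (norm_nonneg _)

lemma aux_sum_diag {D : ℕ} {β : Type*} [AddCommMonoid β] (f : Fin D × Fin D → β) :
    ∑ p ∈ (Finset.univ : Finset (Fin D)).diag, f p = ∑ j, f (j, j) := by
  have him : (Finset.univ : Finset (Fin D)).diag = Finset.univ.image (fun a => (a, a)) := by
    ext ⟨a, b⟩
    simp only [Finset.mem_diag, Finset.mem_image, Finset.mem_univ, true_and]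
    constructor
    · rintro rfl; exact ⟨a, rfl⟩
    · rintro ⟨x, hx⟩; cases hx; rfl
  rw [him, Finset.sum_image (fun x _ y _ h => (Prod.mk.injEq _ _ _ _ ▸ h : _ ∧ _).1)]

set_option maxHeartbeats 2000000 in
set_option synthInstance.maxHeartbeats 1000000 in
/-- For `H = U diag(E) U†` with non-degenerate gaps and `‖A‖ ≤ 1`, for a unit vector `ψ` with
coefficients `c_j = ⟨j|ψ⟩`, the time-averaged fluctuation of `⟨ψ|A(t)|ψ⟩` around
`A^∞_ψ = Σ_j |c_j|² A_{jj}` exists and is bounded by the inverse effective dimension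
`Σ_j |c_j|⁴`. -/
theorem statement8 {D : ℕ} (H A : Matrix (Fin D) (Fin D) ℂ)
    (U : Matrix.unitaryGroup (Fin D) ℂ) (E : Fin D → ℝ)
    (hH : H = (U : Matrix (Fin D) (Fin D) ℂ) * Matrix.diagonal (fun j => (E j : ℂ)) *
      star (U : Matrix (Fin D) (Fin D) ℂ))
    (hgap : ∀ j k j' k' : Fin D, j ≠ k → E j - E k = E j' - E k' → j = j' ∧ k = k')
    (hA : ‖Matrix.toEuclideanCLM (𝕜 := ℂ) A‖ ≤ 1)
    (ψ : Fin D → ℂ) (hψ : star ψ ⬝ᵥ ψ = 1) :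
    ∃ Δ : ℝ,
      Tendsto (fun τ : ℝ => τ⁻¹ * ∫ t in (0:ℝ)..τ,
          (‖
            ((star ψ ⬝ᵥ ((NormedSpace.exp ((Complex.I * (t : ℂ)) • H) * A *
                NormedSpace.exp ((-(Complex.I * (t : ℂ))) • H)).mulVec ψ)) -
              ∑ j, ((‖(star (U : Matrix (Fin D) (Fin D) ℂ)).mulVec ψ j‖ : ℝ) ^ 2 : ℂ) *
                (star (U : Matrix (Fin D) (Fin D) ℂ) * A * (U : Matrix (Fin D) (Fin D) ℂ)) j j)‖) ^ 2)
        atTop (nhds Δ) ∧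
      Δ ≤ ∑ j, ‖(star (U : Matrix (Fin D) (Fin D) ℂ)).mulVec ψ j‖ ^ 4 := by
  classical
  set V : Matrix (Fin D) (Fin D) ℂ := (U : Matrix (Fin D) (Fin D) ℂ) with hVdef
  have hU1 : star V * V = 1 := Unitary.star_mul_self_of_mem U.2
  have hU2 : V * star V = 1 := Unitary.mul_star_self_of_mem U.2
  set c : Fin D → ℂ := (star V).mulVec ψ with hcdef
  set B : Matrix (Fin D) (Fin D) ℂ := star V * A * V with hBdef
  set S : Finset (Fin D × Fin D) := (Finset.univ : Finset (Fin D)).offDiag with hSdef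
  set d : Fin D × Fin D → ℂ :=
    fun p => (starRingEnd ℂ) (c p.1) * c p.2 * B p.1 p.2 with hddef
  set w : Fin D × Fin D → ℝ := fun p => E p.1 - E p.2 with hwdef
  -- diagonalize the exponential
  have hVinv : V⁻¹ = star V := Matrix.inv_eq_left_inv hU1
  have hVunit : IsUnit V := ⟨⟨V, star V, hU2, hU1⟩, rfl⟩
  have hexp : ∀ z : ℂ, NormedSpace.exp (z • H)
      = V * Matrix.diagonal (fun j => Complex.exp (z * E j)) * star V := by
    intro z
    have hdiag : Matrix.diagonal (fun j => z * (E j : ℂ))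
        = z • Matrix.diagonal (fun j => (E j : ℂ)) := by
      rw [← Matrix.diagonal_smul]
      congr 1
    have h1 : z • H = V * Matrix.diagonal (fun j => z * (E j : ℂ)) * star V := by
      rw [hH, hdiag, mul_smul_comm, smul_mul_assoc]
    rw [h1, ← hVinv, Matrix.exp_conj V _ hVunit, hVinv]
    rw [Matrix.exp_diagonal]
    have hfun : NormedSpace.exp (fun j => z * (E j : ℂ)) = fun j => Complex.exp (z * E j) := by
      funext j
      rw [Pi.exp_def]
      exact (congrFun Complex.exp_eq_exp_ℂ (z * E j)).symm
    rw [hfun]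
  -- the quadratic form in the eigenbasis
  have hstarc : star c = star ψ ᵥ* V := by
    rw [hcdef, Matrix.star_mulVec]
    congr 1
    rw [Matrix.star_eq_conjTranspose, Matrix.conjTranspose_conjTranspose]
  have hquad : ∀ N : Matrix (Fin D) (Fin D) ℂ,
      star ψ ⬝ᵥ (V * N * star V).mulVec ψ
        = ∑ j, ∑ k, (starRingEnd ℂ) (c j) * N j k * c k := by
    intro N
    rw [← Matrix.mulVec_mulVec, ← hcdef, Matrix.dotProduct_mulVec, ← Matrix.vecMul_vecMul,
      ← hstarc]
    simp only [dotProduct, Matrix.vecMul, Pi.star_apply, Finset.sum_mul]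
    rw [Finset.sum_comm]
    refine Finset.sum_congr rfl fun j _ => Finset.sum_congr rfl fun k _ => ?_
    rw [Complex.star_def]
  -- the fluctuation is the off-diagonal sum
  have hg : ∀ t : ℝ,
      (star ψ ⬝ᵥ ((NormedSpace.exp ((Complex.I * (t : ℂ)) • H) * A *
          NormedSpace.exp ((-(Complex.I * (t : ℂ))) • H)).mulVec ψ)) -
        ∑ j, ((‖c j‖ : ℝ) ^ 2 : ℂ) * B j j
      = ∑ p ∈ S, d p * Complex.exp (Complex.I * (w p) * t) := by
    intro t
    have e1 : NormedSpace.exp ((Complex.I * (t:ℂ)) • H) * A *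
        NormedSpace.exp ((-(Complex.I * (t:ℂ))) • H)
        = V * (Matrix.diagonal (fun j => Complex.exp ((Complex.I * t) * E j)) * B *
            Matrix.diagonal (fun j => Complex.exp ((-(Complex.I * t)) * E j))) * star V := by
      rw [hexp (Complex.I * t), hexp (-(Complex.I * t)), hBdef]
      simp only [mul_assoc]
    rw [e1, hquad]
    have ha : ∀ j k : Fin D, (starRingEnd ℂ) (c j) *
        (Matrix.diagonal (fun j => Complex.exp ((Complex.I * t) * E j)) * B *
          Matrix.diagonal (fun j => Complex.exp ((-(Complex.I * t)) * E j))) j k * c k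
        = d (j, k) * Complex.exp (Complex.I * (w (j, k)) * t) := by
      intro j k
      rw [Matrix.mul_diagonal, Matrix.diagonal_mul, hddef, hwdef]
      have hee : Complex.exp (Complex.I * t * E j) * Complex.exp (-(Complex.I * t) * E k)
          = Complex.exp (Complex.I * ((E j - E k : ℝ) : ℂ) * t) := by
        rw [← Complex.exp_add]
        congr 1
        push_cast
        ring
      calc (starRingEnd ℂ) (c j) *
          (Complex.exp (Complex.I * t * E j) * B j k * Complex.exp (-(Complex.I * t) * E k)) * c k
          = (starRingEnd ℂ) (c j) * c k * B j k *
            (Complex.exp (Complex.I * t * E j) * Complex.exp (-(Complex.I * t) * E k)) := by ring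
        _ = _ := by rw [hee]
    have hb : ∀ j : Fin D, ((‖c j‖ : ℝ) ^ 2 : ℂ) * B j j
        = d (j, j) * Complex.exp (Complex.I * (w (j, j)) * t) := by
      intro j
      have h1 : ((‖c j‖ : ℝ) ^ 2 : ℂ) = (starRingEnd ℂ) (c j) * c j := by
        rw [← Complex.ofReal_pow, Complex.sq_norm, ← Complex.mul_conj, mul_comm]
      have h2 : Complex.exp (Complex.I * (w (j, j)) * t) = 1 := by
        rw [hwdef]
        simp
      rw [h1, h2, hddef, mul_one]
    calc (∑ j, ∑ k, (starRingEnd ℂ) (c j) *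
        (Matrix.diagonal (fun j => Complex.exp ((Complex.I * t) * E j)) * B *
          Matrix.diagonal (fun j => Complex.exp ((-(Complex.I * t)) * E j))) j k * c k) -
        ∑ j, ((‖c j‖ : ℝ) ^ 2 : ℂ) * B j j
        = (∑ j, ∑ k, d (j, k) * Complex.exp (Complex.I * (w (j, k)) * t)) -
          ∑ j, d (j, j) * Complex.exp (Complex.I * (w (j, j)) * t) := by
          rw [Finset.sum_congr rfl fun j _ => Finset.sum_congr rfl fun k _ => ha j k,
            Finset.sum_congr rfl fun j _ => hb j]
      _ = (∑ p ∈ Finset.univ ×ˢ Finset.univ, d p * Complex.exp (Complex.I * (w p) * t)) -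
          ∑ p ∈ (Finset.univ : Finset (Fin D)).diag, d p * Complex.exp (Complex.I * (w p) * t) := by
          rw [Finset.sum_product, aux_sum_diag]
      _ = ∑ p ∈ S, d p * Complex.exp (Complex.I * (w p) * t) := by
          rw [hSdef, ← Finset.diag_union_offDiag (Finset.univ : Finset (Fin D)),
            Finset.sum_union (Finset.disjoint_diag_offDiag _)]
          ring
  refine ⟨∑ p ∈ S, Complex.normSq (d p), ?_, ?_⟩
  · -- the limit
    set T : Finset ((Fin D × Fin D) × (Fin D × Fin D)) := S ×ˢ S with hTdef
    have hcont : ∀ (a : ℂ) (ω : ℝ),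
        Continuous fun t : ℝ => a * Complex.exp (Complex.I * ω * t) := by
      intro a ω
      exact continuous_const.mul (Complex.continuous_exp.comp (by fun_prop))
    have habs : ∀ t : ℝ,
        ‖∑ p ∈ S, d p * Complex.exp (Complex.I * (w p) * t)‖ ^ 2
        = (∑ x ∈ T, d x.1 * (starRingEnd ℂ) (d x.2) *
            Complex.exp (Complex.I * ((w x.1 - w x.2) : ℝ) * t)).re := by
      intro t
      have h1 : (∑ p ∈ S, d p * Complex.exp (Complex.I * (w p) * t)) *
          (starRingEnd ℂ) (∑ p ∈ S, d p * Complex.exp (Complex.I * (w p) * t))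
          = ∑ x ∈ T, d x.1 * (starRingEnd ℂ) (d x.2) *
            Complex.exp (Complex.I * ((w x.1 - w x.2) : ℝ) * t) := by
        rw [map_sum, Finset.sum_mul_sum, hTdef, Finset.sum_product]
        refine Finset.sum_congr rfl fun p _ => Finset.sum_congr rfl fun q _ => ?_
        rw [map_mul]
        have hce : (starRingEnd ℂ) (Complex.exp (Complex.I * (w q) * t))
            = Complex.exp (-(Complex.I * (w q) * t)) := by
          rw [← Complex.exp_conj]
          congr 1
          rw [map_mul, map_mul, Complex.conj_I, Complex.conj_ofReal, Complex.conj_ofReal]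
          ring
        rw [hce]
        have hee : Complex.exp (Complex.I * (w p) * t) * Complex.exp (-(Complex.I * (w q) * t))
            = Complex.exp (Complex.I * ((w p - w q : ℝ) : ℂ) * t) := by
          rw [← Complex.exp_add]
          congr 1
          push_cast
          ring
        calc d p * Complex.exp (Complex.I * (w p) * t) *
            ((starRingEnd ℂ) (d q) * Complex.exp (-(Complex.I * (w q) * t)))
            = d p * (starRingEnd ℂ) (d q) *
              (Complex.exp (Complex.I * (w p) * t) *
                Complex.exp (-(Complex.I * (w q) * t))) := by ring
          _ = _ := by rw [hee]
      rw [Complex.sq_norm, ← h1, Complex.mul_conj, Complex.ofReal_re]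
    have hintg : ∀ (x : (Fin D × Fin D) × (Fin D × Fin D)) (τ : ℝ),
        IntervalIntegrable (fun t : ℝ => d x.1 * (starRingEnd ℂ) (d x.2) *
          Complex.exp (Complex.I * ((w x.1 - w x.2) : ℝ) * t)) MeasureTheory.volume 0 τ :=
      fun x τ => (hcont _ _).intervalIntegrable _ _
    have key : ∀ τ : ℝ, τ⁻¹ * (∫ t in (0:ℝ)..τ,
        ‖∑ p ∈ S, d p * Complex.exp (Complex.I * (w p) * t)‖ ^ 2)
        = (∑ x ∈ T, d x.1 * (starRingEnd ℂ) (d x.2) *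
            ((τ:ℂ)⁻¹ * ∫ t in (0:ℝ)..τ,
              Complex.exp (Complex.I * ((w x.1 - w x.2) : ℝ) * t))).re := by
      intro τ
      have hint : IntervalIntegrable (fun t : ℝ => ∑ x ∈ T,
          d x.1 * (starRingEnd ℂ) (d x.2) *
            Complex.exp (Complex.I * ((w x.1 - w x.2) : ℝ) * t)) MeasureTheory.volume 0 τ :=
        (continuous_finset_sum T fun x _ => hcont _ _).intervalIntegrable _ _
      have step1 : (∫ t in (0:ℝ)..τ,
          ‖∑ p ∈ S, d p * Complex.exp (Complex.I * (w p) * t)‖ ^ 2)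
          = Complex.reCLM (∫ t in (0:ℝ)..τ, ∑ x ∈ T,
              d x.1 * (starRingEnd ℂ) (d x.2) *
                Complex.exp (Complex.I * ((w x.1 - w x.2) : ℝ) * t)) := by
        rw [← ContinuousLinearMap.intervalIntegral_comp_comm _ hint]
        exact intervalIntegral.integral_congr fun t _ => habs t
      have step2 : (∫ t in (0:ℝ)..τ, ∑ x ∈ T,
          d x.1 * (starRingEnd ℂ) (d x.2) *
            Complex.exp (Complex.I * ((w x.1 - w x.2) : ℝ) * t))
          = ∑ x ∈ T, d x.1 * (starRingEnd ℂ) (d x.2) *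
              (∫ t in (0:ℝ)..τ, Complex.exp (Complex.I * ((w x.1 - w x.2) : ℝ) * t)) := by
        rw [intervalIntegral.integral_finset_sum fun x _ => hintg x τ]
        exact Finset.sum_congr rfl fun x _ => intervalIntegral.integral_const_mul _ _
      rw [step1, step2]
      have h4 : (∑ x ∈ T, d x.1 * (starRingEnd ℂ) (d x.2) *
          (((τ:ℂ))⁻¹ * ∫ t in (0:ℝ)..τ, Complex.exp (Complex.I * ((w x.1 - w x.2) : ℝ) * t)))
          = ((τ⁻¹ : ℝ) : ℂ) * ∑ x ∈ T, d x.1 * (starRingEnd ℂ) (d x.2) *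
            (∫ t in (0:ℝ)..τ, Complex.exp (Complex.I * ((w x.1 - w x.2) : ℝ) * t)) := by
        rw [Finset.mul_sum]
        refine Finset.sum_congr rfl fun x _ => ?_
        rw [Complex.ofReal_inv]
        ring
      rw [h4, Complex.re_ofReal_mul]
      rfl
    have hlim : Tendsto (fun τ : ℝ => ∑ x ∈ T, d x.1 * (starRingEnd ℂ) (d x.2) *
        ((τ:ℂ)⁻¹ * ∫ t in (0:ℝ)..τ,
          Complex.exp (Complex.I * ((w x.1 - w x.2) : ℝ) * t))) atTop
        (nhds (∑ x ∈ T, d x.1 * (starRingEnd ℂ) (d x.2) *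
          (if (w x.1 - w x.2 : ℝ) = 0 then (1:ℂ) else 0))) :=
      tendsto_finset_sum _ fun x _ => (aux_cesaro_exp (w x.1 - w x.2)).const_mul _
    have hre : Tendsto (fun τ : ℝ => (∑ x ∈ T, d x.1 * (starRingEnd ℂ) (d x.2) *
        ((τ:ℂ)⁻¹ * ∫ t in (0:ℝ)..τ,
          Complex.exp (Complex.I * ((w x.1 - w x.2) : ℝ) * t))).re) atTop
        (nhds ((∑ x ∈ T, d x.1 * (starRingEnd ℂ) (d x.2) *
          (if (w x.1 - w x.2 : ℝ) = 0 then (1:ℂ) else 0)).re)) :=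
      (Complex.continuous_re.tendsto _).comp hlim
    have hΛ : (∑ x ∈ T, d x.1 * (starRingEnd ℂ) (d x.2) *
        (if (w x.1 - w x.2 : ℝ) = 0 then (1:ℂ) else 0)).re
        = ∑ p ∈ S, Complex.normSq (d p) := by
      have hinner : ∀ p ∈ S, (∑ q ∈ S, d p * (starRingEnd ℂ) (d q) *
          (if (w p - w q : ℝ) = 0 then (1:ℂ) else 0)) = d p * (starRingEnd ℂ) (d p) := by
        intro p hp
        rw [Finset.sum_eq_single_of_mem p hp]
        · simp
        · intro q hq hqp
          have hne : ¬ ((w p - w q : ℝ) = 0) := by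
            intro h0
            obtain ⟨-, -, hp12⟩ := Finset.mem_offDiag.1 (hSdef ▸ hp)
            have hg := hgap p.1 p.2 q.1 q.2 hp12 (by
              have := sub_eq_zero.1 h0
              rw [hwdef] at this
              exact this)
            exact hqp (Prod.ext hg.1.symm hg.2.symm)
          simp [hne]
      rw [hTdef, Finset.sum_product,
        Finset.sum_congr rfl hinner, Complex.re_sum]
      refine Finset.sum_congr rfl fun p _ => ?_
      rw [Complex.mul_conj, Complex.ofReal_re]
    rw [← hΛ]
    refine Tendsto.congr' ?_ hre
    filter_upwards with τ
    rw [← key]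
    congr 1
    exact intervalIntegral.integral_congr fun t _ => by rw [hg t]
  · -- the bound
    have hBn : ‖Matrix.toEuclideanCLM (𝕜 := ℂ) B‖ ≤ 1 := by
      rw [hBdef]
      exact aux_conj_norm A V hU1 hU2 hA
    have hrow := aux_row B hBn
    have hcol := aux_col B hBn
    have step1 : ∑ p ∈ S, Complex.normSq (d p)
        ≤ ∑ p ∈ Finset.univ ×ˢ Finset.univ,
            (Complex.normSq (c p.1) ^ 2 / 2 + Complex.normSq (c p.2) ^ 2 / 2) *
              Complex.normSq (B p.1 p.2) := by
      refine le_trans (Finset.sum_le_sum (fun p _ => ?_))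
        (Finset.sum_le_sum_of_subset_of_nonneg ?_ ?_)
      · show Complex.normSq (d p) ≤
          (Complex.normSq (c p.1) ^ 2 / 2 + Complex.normSq (c p.2) ^ 2 / 2) *
            Complex.normSq (B p.1 p.2)
        rw [hddef]
        simp only [Complex.normSq_mul, Complex.normSq_conj]
        have h1 := Complex.normSq_nonneg (c p.1)
        have h2 := Complex.normSq_nonneg (c p.2)
        have h3 := Complex.normSq_nonneg (B p.1 p.2)
        nlinarith [sq_nonneg (Complex.normSq (c p.1) - Complex.normSq (c p.2))]
      · intro p hp
        rcases Finset.mem_offDiag.1 (hSdef ▸ hp) with ⟨h1, h2, -⟩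
        exact Finset.mem_product.2 ⟨h1, h2⟩
      · intro p _ _
        have h1 := sq_nonneg (Complex.normSq (c p.1))
        have h2 := sq_nonneg (Complex.normSq (c p.2))
        have h3 := Complex.normSq_nonneg (B p.1 p.2)
        nlinarith
    have step2 : ∑ p ∈ Finset.univ ×ˢ Finset.univ,
        (Complex.normSq (c p.1) ^ 2 / 2 + Complex.normSq (c p.2) ^ 2 / 2) *
          Complex.normSq (B p.1 p.2)
        ≤ ∑ j, Complex.normSq (c j) ^ 2 := by
      rw [Finset.sum_product]
      have hsplit : ∀ j k : Fin D,
          (Complex.normSq (c j) ^ 2 / 2 + Complex.normSq (c k) ^ 2 / 2) *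
            Complex.normSq (B j k)
          = Complex.normSq (c j) ^ 2 / 2 * Complex.normSq (B j k)
            + Complex.normSq (c k) ^ 2 / 2 * Complex.normSq (B j k) := fun j k => by ring
      calc ∑ j, ∑ k, (Complex.normSq (c j) ^ 2 / 2 + Complex.normSq (c k) ^ 2 / 2) *
            Complex.normSq (B j k)
          = (∑ j, ∑ k, Complex.normSq (c j) ^ 2 / 2 * Complex.normSq (B j k))
            + ∑ j, ∑ k, Complex.normSq (c k) ^ 2 / 2 * Complex.normSq (B j k) := by
            rw [← Finset.sum_add_distrib]
            refine Finset.sum_congr rfl fun j _ => ?_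
            rw [← Finset.sum_add_distrib]
            exact Finset.sum_congr rfl fun k _ => hsplit j k
        _ ≤ (∑ j, Complex.normSq (c j) ^ 2 / 2) + ∑ k, Complex.normSq (c k) ^ 2 / 2 := by
            refine add_le_add ?_ ?_
            · refine Finset.sum_le_sum fun j _ => ?_
              rw [← Finset.mul_sum]
              calc Complex.normSq (c j) ^ 2 / 2 * (∑ k, Complex.normSq (B j k))
                  ≤ Complex.normSq (c j) ^ 2 / 2 * 1 :=
                    mul_le_mul_of_nonneg_left (hrow j) (by positivity)
                _ = Complex.normSq (c j) ^ 2 / 2 := mul_one _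
            · rw [Finset.sum_comm]
              refine Finset.sum_le_sum fun k _ => ?_
              rw [← Finset.mul_sum]
              calc Complex.normSq (c k) ^ 2 / 2 * (∑ j, Complex.normSq (B j k))
                  ≤ Complex.normSq (c k) ^ 2 / 2 * 1 :=
                    mul_le_mul_of_nonneg_left (hcol k) (by positivity)
                _ = Complex.normSq (c k) ^ 2 / 2 := mul_one _
        _ = ∑ j, Complex.normSq (c j) ^ 2 := by
            rw [← Finset.sum_add_distrib]
            exact Finset.sum_congr rfl fun j _ => by ring
    have htgt : ∑ j, Complex.normSq (c j) ^ 2 = ∑ j, ‖c j‖ ^ 4 := by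
      refine Finset.sum_congr rfl fun j _ => ?_
      rw [show (4:ℕ) = 2 * 2 from rfl, pow_mul, Complex.sq_norm]
    calc ∑ p ∈ S, Complex.normSq (d p) ≤ _ := step1
      _ ≤ _ := step2
      _ = _ := htgt
end

section
/- Let a_1 ≤ a_2 ≤ ... ≤ a_D be real numbers with |a_j| ≤ K, and suppose that for every δ' > 0, |{j : a_j ≥ δ'}| ≤ D e^{-γ n δ'²} for constants γ, K > 0. Let m = |{j : a_j ≥ δ}| for some δ > 0, and suppose m δ ≤ Σ_{j=D-m+1}^D a_j. Then for any 1 ≤ m' ≤ m, δ ≤ sqrt(log(D/m')/(γ n)) + K m'/m. -/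
/-- Tail-count bound for ordered bounded reals: if `|a_j| ≤ K`, `a` is monotone on
`{0,...,D-1}`, the tail counts satisfy `|{j < D : a_j ≥ δ'}| ≤ D e^{-γ n δ'²}`, and the top
`m = |{j < D : a_j ≥ δ}|` values sum to at least `mδ`, then for any `1 ≤ m' ≤ m`,
`δ ≤ sqrt(log(D/m')/(γn)) + K m'/m`. -/
theorem statement13 (D n : ℕ) (hD : 1 ≤ D) (hn : 1 ≤ n) (a : ℕ → ℝ) (K γ δ : ℝ)
    (hK : 0 < K) (hγ : 0 < γ) (hδ : 0 < δ)
    (hbound : ∀ j < D, |a j| ≤ K)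
    (hmono : ∀ i j : ℕ, i ≤ j → j < D → a i ≤ a j)
    (htail : ∀ δ' : ℝ, 0 < δ' →
      (((Finset.range D).filter fun j => δ' ≤ a j).card : ℝ) ≤ (D : ℝ) * Real.exp (-γ * n * δ' ^ 2))
    (m : ℕ) (hm : m = ((Finset.range D).filter fun j => δ ≤ a j).card)
    (hsum : (m : ℝ) * δ ≤ ∑ j ∈ Finset.Ico (D - m) D, a j) :
    ∀ m' : ℕ, 1 ≤ m' → m' ≤ m →
      δ ≤ Real.sqrt (Real.log ((D : ℝ) / (m' : ℝ)) / (γ * n)) + K * (m' : ℝ) / (m : ℝ) := by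
  intro m' hm'1 hm'm
  have hmD : m ≤ D := by
    rw [hm]
    exact (Finset.card_filter_le _ _).trans (by simp)
  have hm'D : m' ≤ D := hm'm.trans hmD
  have hm1 : 1 ≤ m := hm'1.trans hm'm
  have hnpos : (0:ℝ) < n := by exact_mod_cast hn
  have hDpos : (0:ℝ) < D := by exact_mod_cast hD
  have hm'pos : (0:ℝ) < m' := by exact_mod_cast hm'1
  have hmpos : (0:ℝ) < m := by exact_mod_cast hm1
  set t := Real.sqrt (Real.log ((D : ℝ) / (m' : ℝ)) / (γ * n)) with ht
  have ht0 : 0 ≤ t := Real.sqrt_nonneg _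
  have hDm' : D - m' < D := by omega
  have hγn : (0:ℝ) < γ * n := by positivity
  have hkey : a (D - m') ≤ t := by
    by_contra h
    push_neg at h
    have hpos : 0 < a (D - m') := lt_of_le_of_lt ht0 h
    have hc := htail (a (D - m')) hpos
    have hsub : Finset.Ico (D - m') D ⊆
        (Finset.range D).filter fun j => a (D - m') ≤ a j := by
      intro j hj
      simp only [Finset.mem_Ico] at hj
      simp only [Finset.mem_filter, Finset.mem_range]
      exact ⟨hj.2, hmono _ _ hj.1 hj.2⟩
    have hcard : (m' : ℝ) ≤
        (((Finset.range D).filter fun j => a (D - m') ≤ a j).card : ℝ) := by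
      have h2 := Finset.card_le_card hsub
      rw [Nat.card_Ico] at h2
      have : m' ≤ ((Finset.range D).filter fun j => a (D - m') ≤ a j).card := by omega
      exact_mod_cast this
    have hlog : 0 ≤ Real.log ((D:ℝ)/(m':ℝ)) := by
      apply Real.log_nonneg
      rw [le_div_iff₀ hm'pos]
      simpa using (by exact_mod_cast hm'D : (m':ℝ) ≤ D)
    have ht2 : t^2 = Real.log ((D:ℝ)/(m':ℝ)) / (γ * n) := Real.sq_sqrt (by positivity)
    have hexp : (D:ℝ) * Real.exp (-γ * n * t^2) = m' := by
      rw [ht2]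
      have heq : -γ * n * (Real.log ((D:ℝ)/(m':ℝ)) / (γ * n)) = Real.log ((m':ℝ)/(D:ℝ)) := by
        rw [Real.log_div (by positivity) (by positivity),
            Real.log_div (by positivity) (by positivity)]
        field_simp
        ring
      rw [heq, Real.exp_log (by positivity)]
      field_simp
    have hlt : (D:ℝ) * Real.exp (-γ * n * (a (D - m'))^2)
        < (D:ℝ) * Real.exp (-γ * n * t^2) := by
      apply mul_lt_mul_of_pos_left _ hDpos
      apply Real.exp_lt_exp.2
      have hsq : t^2 < (a (D - m'))^2 := by nlinarith
      nlinarith [mul_lt_mul_of_pos_left hsq hγn]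
    rw [hexp] at hlt
    linarith [hcard.trans hc]
  -- split the sum
  have hDmm : D - m ≤ D - m' := by omega
  have hsplit := Finset.sum_Ico_consecutive a hDmm (le_of_lt hDm')
  have h1 : ∑ j ∈ Finset.Ico (D - m) (D - m'), a j ≤ (m : ℝ) * t := by
    calc ∑ j ∈ Finset.Ico (D - m) (D - m'), a j
        ≤ ∑ _j ∈ Finset.Ico (D - m) (D - m'), t := by
          apply Finset.sum_le_sum
          intro j hj
          simp only [Finset.mem_Ico] at hj
          exact (hmono j (D - m') (le_of_lt hj.2) hDm').trans hkey
      _ = ((D - m' - (D - m) : ℕ) : ℝ) * t := by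
          rw [Finset.sum_const, Nat.card_Ico, nsmul_eq_mul]
      _ ≤ (m : ℝ) * t := by
          apply mul_le_mul_of_nonneg_right _ ht0
          exact_mod_cast (by omega : D - m' - (D - m) ≤ m)
  have h2 : ∑ j ∈ Finset.Ico (D - m') D, a j ≤ (m' : ℝ) * K := by
    calc ∑ j ∈ Finset.Ico (D - m') D, a j
        ≤ ∑ _j ∈ Finset.Ico (D - m') D, K := by
          apply Finset.sum_le_sum
          intro j hj
          simp only [Finset.mem_Ico] at hj
          exact (abs_le.1 (hbound j hj.2)).2
      _ = ((D - (D - m') : ℕ) : ℝ) * K := by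
          rw [Finset.sum_const, Nat.card_Ico, nsmul_eq_mul]
      _ ≤ (m' : ℝ) * K := by
          apply mul_le_mul_of_nonneg_right _ hK.le
          exact_mod_cast (by omega : D - (D - m') ≤ m')
  have hmain : (m : ℝ) * δ ≤ (m : ℝ) * t + (m' : ℝ) * K := by
    rw [← hsplit] at hsum
    linarith
  rw [← sub_nonneg]
  have heq : t + K * (m' : ℝ) / (m : ℝ) - δ
      = ((m : ℝ) * t + (m' : ℝ) * K - (m : ℝ) * δ) / (m : ℝ) := by
    field_simp
  rw [heq]
  apply div_nonneg _ hmpos.le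
  linarith
end

section
/- Let H be a Hamiltonian on ℂ^D whose spectrum has non-degenerate gaps, with orthonormal eigenbasis |j⟩, and let A, B be operators with ‖A‖, ‖B‖ ≤ 1. Then the late-time OTOC lim_{τ→∞}(1/τ)∫_0^τ tr(A†(t)B†A(t)B)/D dt equals (1/D) Σ_{j,k} (A†)_{jj}(B†)_{jk}A_{kk}B_{kj} + (1/D) Σ_{j≠k} (A†)_{jk}(B†)_{kk}A_{kj}B_{jj}, and its absolute value is at most (2/D)(Σ_j |A_{jj}|² + Σ_j |B_{jj}|²)^{1/2} · (constants), in particular at most 2·max((1/D)Σ_j|A_{jj}|², (1/D)Σ_j|B_{jj}|²)^{1/2} up to norm factors. -/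
open scoped Matrix
open Filter

set_option maxHeartbeats 1000000

/-- Cesàro average of a complex exponential with real frequency. -/
lemma otoc_cesaro_exp (θ : ℝ) :
    Tendsto (fun τ : ℝ => (τ : ℂ)⁻¹ * ∫ t in (0:ℝ)..τ, Complex.exp (Complex.I * t * θ))
      atTop (nhds (if θ = 0 then 1 else 0)) := by
  by_cases h : θ = 0
  · simp only [h, if_pos rfl, Complex.ofReal_zero, mul_zero, Complex.exp_zero]
    have : ∀ᶠ τ : ℝ in atTop, (1:ℂ) = (τ:ℂ)⁻¹ * ∫ t in (0:ℝ)..τ, (1:ℂ) := by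
      filter_upwards [eventually_gt_atTop (0:ℝ)] with τ hτ
      rw [intervalIntegral.integral_const, sub_zero, Complex.real_smul, mul_one,
        inv_mul_cancel₀ (Complex.ofReal_ne_zero.mpr hτ.ne')]
    exact Tendsto.congr' this tendsto_const_nhds
  · rw [if_neg h]
    have hc : (Complex.I * θ) ≠ 0 := by
      simp [Complex.I_ne_zero, Complex.ofReal_ne_zero.mpr h]
    have key : ∀ τ : ℝ, (∫ t in (0:ℝ)..τ, Complex.exp (Complex.I * t * θ)) =
        (Complex.exp (Complex.I * θ * τ) - 1) / (Complex.I * θ) := by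
      intro τ
      have h2 : ∀ t : ℝ, Complex.exp (Complex.I * t * θ) = Complex.exp (Complex.I * θ * t) := by
        intro t; ring_nf
      simp only [h2]
      have := integral_exp_mul_complex (a := (0:ℝ)) (b := τ) hc
      rw [this]
      norm_num
    simp only [key]
    have hb : ∀ τ : ℝ, ‖(Complex.exp (Complex.I * θ * τ) - 1) / (Complex.I * θ)‖ ≤
        2 / ‖(Complex.I * (θ:ℂ))‖ := by
      intro τ
      rw [norm_div]
      gcongr
      calc ‖Complex.exp (Complex.I * θ * τ) - 1‖ ≤
            ‖Complex.exp (Complex.I * θ * τ)‖ + ‖(1:ℂ)‖ := norm_sub_le _ _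
        _ ≤ 2 := by
            have : Complex.I * θ * τ = ((θ * τ : ℝ) : ℂ) * Complex.I := by
              push_cast; ring
            rw [this, Complex.norm_exp_ofReal_mul_I]
            norm_num
    have h0 : Tendsto (fun τ : ℝ => (τ:ℂ)⁻¹) atTop (nhds 0) := by
      have : Tendsto (fun τ : ℝ => ((τ⁻¹ : ℝ) : ℂ)) atTop (nhds ((0:ℝ):ℂ)) :=
        (Complex.continuous_ofReal.tendsto 0).comp tendsto_inv_atTop_zero
      simpa using this
    exact h0.zero_mul_isBoundedUnder_le
      ⟨2 / ‖(Complex.I * (θ:ℂ))‖, by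
        simp only [eventually_map, Function.comp]
        exact Eventually.of_forall hb⟩

/-- Cesàro average of a finite sum of complex exponentials. -/
lemma otoc_cesaro_sum {ι : Type*} [Fintype ι] (c : ι → ℂ) (θ : ι → ℝ) :
    Tendsto (fun τ : ℝ => (τ : ℂ)⁻¹ * ∫ t in (0:ℝ)..τ,
        ∑ i, c i * Complex.exp (Complex.I * t * θ i)) atTop
      (nhds (∑ i, if θ i = 0 then c i else 0)) := by
  have hcont : ∀ i : ι, Continuous fun t : ℝ => Complex.exp (Complex.I * t * θ i) := by
    intro i
    exact Complex.continuous_exp.comp (by continuity)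
  have hint : ∀ τ : ℝ, (∫ t in (0:ℝ)..τ, ∑ i, c i * Complex.exp (Complex.I * t * θ i)) =
      ∑ i, c i * ∫ t in (0:ℝ)..τ, Complex.exp (Complex.I * t * θ i) := by
    intro τ
    rw [intervalIntegral.integral_finset_sum]
    · exact Finset.sum_congr rfl fun i _ => intervalIntegral.integral_const_mul _ _
    · intro i _
      exact ((continuous_const.mul (hcont i)).intervalIntegrable _ _)
  simp only [hint, Finset.mul_sum]
  have : ∀ i : ι, (if θ i = 0 then c i else 0) = c i * (if θ i = 0 then 1 else 0) := by
    intro i; by_cases h : θ i = 0 <;> simp [h]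
  simp only [this]
  apply tendsto_finset_sum
  intro i _
  have := (otoc_cesaro_exp (θ i)).const_mul (c i)
  simpa only [mul_left_comm] using this

lemma otoc_trace4 {D : ℕ} (A B C F : Matrix (Fin D) (Fin D) ℂ) :
    (A*B*C*F).trace = ∑ j, ∑ k, ∑ l, ∑ m, A j k * B k l * C l m * F m j := by
  have h1 : ∀ j m, (A*B*C) j m = ∑ k, ∑ l, A j k * B k l * C l m := by
    intro j m
    rw [Matrix.mul_apply]
    rw [Finset.sum_comm]
    apply Finset.sum_congr rfl; intro l _
    rw [Matrix.mul_apply, Finset.sum_mul]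
  calc (A*B*C*F).trace = ∑ j, ∑ m, (A*B*C) j m * F m j := by
        simp [Matrix.trace, Matrix.diag_apply, Matrix.mul_apply]
    _ = ∑ j, ∑ m, ∑ k, ∑ l, A j k * B k l * C l m * F m j := by
        apply Finset.sum_congr rfl; intro j _
        apply Finset.sum_congr rfl; intro m _
        rw [h1, Finset.sum_mul]
        apply Finset.sum_congr rfl; intro k _
        rw [Finset.sum_mul]
    _ = ∑ j, ∑ k, ∑ l, ∑ m, A j k * B k l * C l m * F m j := by
        apply Finset.sum_congr rfl; intro j _
        rw [Finset.sum_comm]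
        apply Finset.sum_congr rfl; intro k _
        rw [Finset.sum_comm]

lemma otoc_sandwich {D : ℕ} (A B : Matrix (Fin D) (Fin D) ℂ) (V : Matrix (Fin D) (Fin D) ℂ)
    (hV2 : V * star V = 1) (d e : Fin D → ℂ) :
    (V * Matrix.diagonal d * star V) * Aᴴ * (V * Matrix.diagonal e * star V) * Bᴴ *
      ((V * Matrix.diagonal d * star V) * A * (V * Matrix.diagonal e * star V)) * B =
    V * (Matrix.diagonal d * (star V * Aᴴ * V) * Matrix.diagonal e * (star V * Bᴴ * V) *
      (Matrix.diagonal d * (star V * A * V) * Matrix.diagonal e) * (star V * B * V)) * star V := by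
  simp only [Matrix.mul_assoc, hV2, Matrix.mul_one]

lemma otoc_trace_conj {D : ℕ} (V X : Matrix (Fin D) (Fin D) ℂ) (hV1 : star V * V = 1) :
    (V * X * star V).trace = X.trace := by
  rw [Matrix.trace_mul_cycle, hV1, Matrix.one_mul]

lemma otoc_diag_sandwich_apply {D : ℕ} (d e : Fin D → ℂ) (M : Matrix (Fin D) (Fin D) ℂ)
    (j k : Fin D) :
    (Matrix.diagonal d * M * Matrix.diagonal e) j k = d j * M j k * e k := by
  rw [Matrix.mul_diagonal, Matrix.diagonal_mul]

lemma otoc_conjT_conj {D : ℕ} (A V : Matrix (Fin D) (Fin D) ℂ) :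
    star V * Aᴴ * V = (star V * A * V)ᴴ := by
  simp [Matrix.conjTranspose_mul, Matrix.star_eq_conjTranspose, Matrix.mul_assoc]

lemma otoc_exp_conj_diag {D : ℕ} (V : Matrix (Fin D) (Fin D) ℂ) (hV2 : V * star V = 1)
    (c : ℂ) (E : Fin D → ℝ) :
    NormedSpace.exp (c • (V * Matrix.diagonal (fun j => (E j : ℂ)) * star V)) =
      V * Matrix.diagonal (fun j => Complex.exp (c * E j)) * star V := by
  have hinv : V⁻¹ = star V := Matrix.inv_eq_right_inv hV2
  have hunit : IsUnit V := by
    have := invertibleOfRightInverse (h := hV2)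
    exact isUnit_of_invertible V
  have h1 : c • (V * Matrix.diagonal (fun j => (E j : ℂ)) * star V) =
      V * Matrix.diagonal (fun j => c * (E j : ℂ)) * star V := by
    rw [← smul_mul_assoc, ← mul_smul_comm]
    congr 2
    rw [← Matrix.diagonal_smul]
    congr 1
  rw [h1, ← hinv, Matrix.exp_conj V _ hunit, Matrix.exp_diagonal]
  congr 2
  funext j
  rw [Pi.exp_def, Complex.exp_eq_exp_ℂ]

lemma otoc_trace_formula {D : ℕ} (A B V : Matrix (Fin D) (Fin D) ℂ)
    (hV1 : star V * V = 1) (hV2 : V * star V = 1) (E : Fin D → ℝ) (t : ℝ) :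
    (NormedSpace.exp ((Complex.I * (t : ℂ)) •
          (V * Matrix.diagonal (fun j => (E j : ℂ)) * star V)) * Aᴴ *
        NormedSpace.exp ((-(Complex.I * (t : ℂ))) •
          (V * Matrix.diagonal (fun j => (E j : ℂ)) * star V)) * Bᴴ *
      (NormedSpace.exp ((Complex.I * (t : ℂ)) •
          (V * Matrix.diagonal (fun j => (E j : ℂ)) * star V)) * A *
        NormedSpace.exp ((-(Complex.I * (t : ℂ))) •
          (V * Matrix.diagonal (fun j => (E j : ℂ)) * star V))) * B).trace
    = ∑ j, ∑ k, ∑ l, ∑ m,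
        ((star V * A * V)ᴴ j k * (star V * B * V)ᴴ k l * (star V * A * V) l m *
          (star V * B * V) m j) *
          Complex.exp (Complex.I * (t : ℂ) *
            (((E j : ℂ)) - (E k : ℂ) + (E l : ℂ) - (E m : ℂ))) := by
  rw [otoc_exp_conj_diag V hV2 (Complex.I * (t : ℂ)) E,
    otoc_exp_conj_diag V hV2 (-(Complex.I * (t : ℂ))) E]
  rw [otoc_sandwich A B V hV2 _ _, otoc_trace_conj _ _ hV1, otoc_trace4]
  apply Finset.sum_congr rfl; intro j _
  apply Finset.sum_congr rfl; intro k _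
  apply Finset.sum_congr rfl; intro l _
  apply Finset.sum_congr rfl; intro m _
  simp only [otoc_diag_sandwich_apply, otoc_conjT_conj]
  have hexp : Complex.exp (Complex.I * (t:ℂ) * (E j)) *
      Complex.exp (-(Complex.I * (t:ℂ)) * (E k)) *
      Complex.exp (Complex.I * (t:ℂ) * (E l)) *
      Complex.exp (-(Complex.I * (t:ℂ)) * (E m)) =
      Complex.exp (Complex.I * (t : ℂ) *
        (((E j : ℂ)) - (E k : ℂ) + (E l : ℂ) - (E m : ℂ))) := by
    rw [← Complex.exp_add, ← Complex.exp_add, ← Complex.exp_add]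
    congr 1; ring
  rw [← hexp]; ring

lemma otoc_limit_eq {D : ℕ} (At Bt : Matrix (Fin D) (Fin D) ℂ) (E : Fin D → ℝ)
    (hgap : ∀ j k j' k' : Fin D, j ≠ k → E j - E k = E j' - E k' → j = j' ∧ k = k') :
    (∑ j, ∑ k, ∑ l, ∑ m, (if E j - E k + E l - E m = 0 then
        (Atᴴ j k * Btᴴ k l * At l m * Bt m j) / (D : ℂ) else 0))
    = (1 / (D : ℂ)) * ∑ j, ∑ k, Atᴴ j j * Btᴴ j k * At k k * Bt k j +
      (1 / (D : ℂ)) * ∑ j, ∑ k, (if j ≠ k then Atᴴ j k * Btᴴ k k * At k j * Bt j j else 0) := by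
  set f : Fin D → Fin D → Fin D → Fin D → ℂ :=
    fun j k l m => (Atᴴ j k * Btᴴ k l * At l m * Bt m j) / (D : ℂ) with hf
  have hEinj : ∀ l m : Fin D, E l = E m → l = m := by
    intro l m h
    by_contra hne
    have := hgap l m l l hne (by rw [h])
    exact hne (this.2.symm)
  have hcond : ∀ j k l m : Fin D, (E j - E k + E l - E m = 0) ↔
      ((j = k ∧ l = m) ∨ (¬(j = k) ∧ m = j ∧ l = k)) := by
    intro j k l m
    constructor
    · intro h
      by_cases hjk : j = k
      · subst hjk
        exact Or.inl ⟨rfl, hEinj l m (by linarith)⟩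
      · have := hgap j k m l hjk (by linarith)
        exact Or.inr ⟨hjk, this.1.symm, this.2.symm⟩
    · rintro (⟨h1, h2⟩ | ⟨h1, h2, h3⟩) <;> subst_vars <;> ring
  have hsplit : ∀ j k l m : Fin D,
      (if E j - E k + E l - E m = 0 then f j k l m else 0) =
      (if j = k ∧ l = m then f j k l m else 0) +
      (if ¬(j = k) ∧ m = j ∧ l = k then f j k l m else 0) := by
    intro j k l m
    by_cases h : E j - E k + E l - E m = 0
    · rw [if_pos h]
      rcases (hcond j k l m).mp h with h' | h'
      · rw [if_pos h', if_neg (by tauto), add_zero]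
      · rw [if_neg (by tauto), if_pos h', zero_add]
    · rw [if_neg h, if_neg (by rw [hcond] at h; tauto), if_neg (by rw [hcond] at h; tauto),
        add_zero]
  change (∑ j, ∑ k, ∑ l, ∑ m, (if E j - E k + E l - E m = 0 then f j k l m else 0)) = _
  simp only [hsplit, Finset.sum_add_distrib]
  congr 1
  · have step : ∀ j : Fin D,
        (∑ k, ∑ l, ∑ m, if j = k ∧ l = m then f j k l m else 0) = ∑ l, f j j l l := by
      intro j
      rw [Finset.sum_eq_single j]
      · apply Finset.sum_congr rfl; intro l _
        rw [Finset.sum_eq_single l]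
        · simp
        · intro m _ hm; rw [if_neg (by tauto)]
        · intro h; exact absurd (Finset.mem_univ l) h
      · intro k _ hk
        apply Finset.sum_eq_zero; intro l _
        apply Finset.sum_eq_zero; intro m _
        rw [if_neg (by tauto)]
      · intro h; exact absurd (Finset.mem_univ j) h
    simp only [step]
    rw [Finset.mul_sum]
    apply Finset.sum_congr rfl; intro j _
    rw [Finset.mul_sum]
    apply Finset.sum_congr rfl; intro l _
    rw [hf]; ring
  · have step : ∀ j k : Fin D,
        (∑ l, ∑ m, if ¬(j = k) ∧ m = j ∧ l = k then f j k l m else 0) =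
        (if j ≠ k then Atᴴ j k * Btᴴ k k * At k j * Bt j j else 0) / (D : ℂ) := by
      intro j k
      rw [Finset.sum_eq_single k]
      · rw [Finset.sum_eq_single j]
        · by_cases h : j = k
          · rw [if_neg (by tauto), if_neg (by tauto), zero_div]
          · rw [if_pos ⟨h, rfl, rfl⟩, if_pos h, hf]
        · intro m _ hm; rw [if_neg (by tauto)]
        · intro h; exact absurd (Finset.mem_univ j) h
      · intro l _ hl
        apply Finset.sum_eq_zero; intro m _
        rw [if_neg (by tauto)]
      · intro h; exact absurd (Finset.mem_univ k) h
    simp only [step]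
    rw [Finset.mul_sum]
    apply Finset.sum_congr rfl; intro j _
    rw [Finset.mul_sum]
    apply Finset.sum_congr rfl; intro k _
    ring

lemma otoc_clm_norm_star {D : ℕ}
    (u : EuclideanSpace ℂ (Fin D) →L[ℂ] EuclideanSpace ℂ (Fin D)) :
    ‖star u‖ = ‖u‖ := by
  rw [ContinuousLinearMap.star_eq_adjoint]
  exact LinearIsometryEquiv.norm_map ContinuousLinearMap.adjoint u

lemma otoc_unit_norm_le {D : ℕ} (U : Matrix.unitaryGroup (Fin D) ℂ) :
    ‖Matrix.toEuclideanCLM (𝕜 := ℂ) (U : Matrix (Fin D) (Fin D) ℂ)‖ ≤ 1 := by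
  set u := Matrix.toEuclideanCLM (𝕜 := ℂ) (U : Matrix (Fin D) (Fin D) ℂ) with hu
  have h1 : star u * u = 1 := by
    rw [hu, ← map_star, ← map_mul]
    rw [show star (U : Matrix (Fin D) (Fin D) ℂ) * (U : Matrix (Fin D) (Fin D) ℂ) = 1 from U.2.1]
    exact map_one _
  have h2 : ‖star u * u‖ = ‖u‖ * ‖u‖ := by
    rw [ContinuousLinearMap.star_eq_adjoint]
    exact ContinuousLinearMap.norm_adjoint_comp_self u
  have h3 : ‖u‖ * ‖u‖ ≤ 1 := by
    rw [← h2, h1]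
    exact ContinuousLinearMap.norm_id_le
  nlinarith [norm_nonneg u]

lemma otoc_conj_norm_le {D : ℕ} (A : Matrix (Fin D) (Fin D) ℂ)
    (U : Matrix.unitaryGroup (Fin D) ℂ)
    (hA : ‖Matrix.toEuclideanCLM (𝕜 := ℂ) A‖ ≤ 1) :
    ‖Matrix.toEuclideanCLM (𝕜 := ℂ)
      (star (U : Matrix (Fin D) (Fin D) ℂ) * A * (U : Matrix (Fin D) (Fin D) ℂ))‖ ≤ 1 := by
  rw [map_mul, map_mul, map_star]
  set u := Matrix.toEuclideanCLM (𝕜 := ℂ) (U : Matrix (Fin D) (Fin D) ℂ)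
  set a := Matrix.toEuclideanCLM (𝕜 := ℂ) A
  have hu : ‖u‖ ≤ 1 := otoc_unit_norm_le U
  have h1 : ‖star u * a * u‖ ≤ ‖star u * a‖ * ‖u‖ := norm_mul_le _ _
  have h2 : ‖star u * a‖ ≤ ‖star u‖ * ‖a‖ := norm_mul_le _ _
  have h3 : ‖star u‖ = ‖u‖ := otoc_clm_norm_star u
  nlinarith [norm_nonneg u, norm_nonneg a, norm_nonneg (star u * a)]

lemma otoc_conjT_norm_le {D : ℕ} (A : Matrix (Fin D) (Fin D) ℂ)
    (hA : ‖Matrix.toEuclideanCLM (𝕜 := ℂ) A‖ ≤ 1) :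
    ‖Matrix.toEuclideanCLM (𝕜 := ℂ) Aᴴ‖ ≤ 1 := by
  rw [← Matrix.star_eq_conjTranspose, map_star, otoc_clm_norm_star]
  exact hA

lemma otoc_col_sq_sum {D : ℕ} (M : Matrix (Fin D) (Fin D) ℂ)
    (hM : ‖Matrix.toEuclideanCLM (𝕜 := ℂ) M‖ ≤ 1) (j : Fin D) :
    ∑ k, Norm.norm (M k j) ^ 2 ≤ 1 := by
  have hx : ‖(EuclideanSpace.single j (1:ℂ) : EuclideanSpace ℂ (Fin D))‖ = 1 := by
    simp
  have hb : ‖Matrix.toEuclideanCLM (𝕜 := ℂ) M (EuclideanSpace.single j (1:ℂ))‖ ≤ 1 := by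
    calc ‖Matrix.toEuclideanCLM (𝕜 := ℂ) M (EuclideanSpace.single j (1:ℂ))‖
        ≤ ‖Matrix.toEuclideanCLM (𝕜 := ℂ) M‖ *
          ‖(EuclideanSpace.single j (1:ℂ) : EuclideanSpace ℂ (Fin D))‖ :=
          (Matrix.toEuclideanCLM (𝕜 := ℂ) M).le_opNorm _
      _ ≤ 1 := by rw [hx, mul_one]; exact hM
  have happ : Matrix.toEuclideanCLM (𝕜 := ℂ) M (EuclideanSpace.single j (1:ℂ)) =
      (WithLp.equiv 2 (Fin D → ℂ)).symm (M.mulVec (Pi.single j 1)) := by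
    rw [show (EuclideanSpace.single j (1:ℂ) : EuclideanSpace ℂ (Fin D)) =
        (WithLp.equiv 2 (Fin D → ℂ)).symm (Pi.single j 1) from rfl]
    rfl
  have hnorm : ‖Matrix.toEuclideanCLM (𝕜 := ℂ) M (EuclideanSpace.single j (1:ℂ))‖ ^ 2 =
      ∑ k, Norm.norm (M k j) ^ 2 := by
    rw [happ, EuclideanSpace.norm_eq]
    rw [Real.sq_sqrt (by positivity)]
    congr 1; funext k
    simp [Matrix.mulVec_single]
  calc ∑ k, Norm.norm (M k j) ^ 2 = _ ^ 2 := hnorm.symm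
    _ ≤ 1 ^ 2 := by apply pow_le_pow_left₀ (norm_nonneg _) hb
    _ = 1 := one_pow 2

lemma otoc_key_sum {D : ℕ} (a : Fin D → ℝ) (w : Fin D → Fin D → ℝ)
    (hcol : ∀ j, ∑ k, w k j ≤ 1) (hrow : ∀ k, ∑ j, w k j ≤ 1) :
    ∑ j, ∑ k, (a j ^ 2 / 2 + a k ^ 2 / 2) * w k j ≤ ∑ j, a j ^ 2 := by
  have expand : ∀ j k : Fin D, (a j ^ 2 / 2 + a k ^ 2 / 2) * w k j =
      a j ^ 2 / 2 * w k j + a k ^ 2 / 2 * w k j := fun j k => by ring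
  simp only [expand, Finset.sum_add_distrib]
  have h1 : ∑ j, ∑ k, a j ^ 2 / 2 * w k j ≤ ∑ j, a j ^ 2 / 2 := by
    refine Finset.sum_le_sum fun j _ => ?_
    rw [← Finset.mul_sum]
    calc a j ^ 2 / 2 * ∑ k, w k j ≤ a j ^ 2 / 2 * 1 :=
          mul_le_mul_of_nonneg_left (hcol j) (by positivity)
      _ = a j ^ 2 / 2 := mul_one _
  have h2 : ∑ j, ∑ k, a k ^ 2 / 2 * w k j ≤ ∑ k, a k ^ 2 / 2 := by
    rw [Finset.sum_comm]
    refine Finset.sum_le_sum fun k _ => ?_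
    rw [← Finset.mul_sum]
    calc a k ^ 2 / 2 * ∑ j, w k j ≤ a k ^ 2 / 2 * 1 :=
          mul_le_mul_of_nonneg_left (hrow k) (by positivity)
      _ = a k ^ 2 / 2 := mul_one _
  calc _ ≤ (∑ j, a j ^ 2 / 2) + ∑ k, a k ^ 2 / 2 := add_le_add h1 h2
    _ = ∑ j, a j ^ 2 := by rw [← Finset.sum_add_distrib]; apply Finset.sum_congr rfl
                           intro j _; ring

lemma otoc_abs_star (z : ℂ) : Norm.norm (star z) = Norm.norm z := by
  simpa using Complex.norm_conj z

lemma otoc_avg_le_one {D : ℕ} (f : Fin D → ℝ) (hf : ∀ j, f j ≤ 1) :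
    (1 / (D : ℝ)) * ∑ j, f j ≤ 1 := by
  have hsum : ∑ j, f j ≤ (D : ℝ) := by
    calc ∑ j, f j ≤ ∑ _j : Fin D, (1:ℝ) := Finset.sum_le_sum fun j _ => hf j
      _ = (D : ℝ) := by simp
  by_cases hD : D = 0
  · subst hD; simp
  · have hD' : (0:ℝ) < D := by positivity
    rw [div_mul_eq_mul_div, one_mul, div_le_one hD']
    exact hsum

lemma otoc_bound_lemma {D : ℕ} (At Bt : Matrix (Fin D) (Fin D) ℂ)
    (hAcol : ∀ j, ∑ k, Norm.norm (At k j) ^ 2 ≤ 1)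
    (hArow : ∀ k, ∑ j, Norm.norm (At k j) ^ 2 ≤ 1)
    (hBcol : ∀ j, ∑ k, Norm.norm (Bt k j) ^ 2 ≤ 1)
    (hBrow : ∀ k, ∑ j, Norm.norm (Bt k j) ^ 2 ≤ 1) :
    Norm.norm ((1 / (D : ℂ)) * ∑ j, ∑ k, Atᴴ j j * Btᴴ j k * At k k * Bt k j +
        (1 / (D : ℂ)) * ∑ j, ∑ k, (if j ≠ k then Atᴴ j k * Btᴴ k k * At k j * Bt j j else 0))
      ≤ 2 * Real.sqrt (max ((1 / (D : ℝ)) * ∑ j, Norm.norm (At j j) ^ 2)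
          ((1 / (D : ℝ)) * ∑ j, Norm.norm (Bt j j) ^ 2)) := by
  have habs1D : Norm.norm (1 / (D : ℂ)) = 1 / (D : ℝ) := by
    rw [norm_div, norm_one, Complex.norm_natCast]
  have hDpos : (0:ℝ) ≤ 1 / (D : ℝ) := by positivity
  set x : ℝ := (1 / (D : ℝ)) * ∑ j, Norm.norm (At j j) ^ 2 with hx
  set y : ℝ := (1 / (D : ℝ)) * ∑ j, Norm.norm (Bt j j) ^ 2 with hy
  have hx0 : 0 ≤ x := by
    rw [hx]; exact mul_nonneg hDpos (Finset.sum_nonneg fun j _ => sq_nonneg _)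
  have hy0 : 0 ≤ y := by
    rw [hy]; exact mul_nonneg hDpos (Finset.sum_nonneg fun j _ => sq_nonneg _)
  have hx1 : x ≤ 1 := by
    rw [hx]
    refine otoc_avg_le_one _ (fun j => ?_)
    calc Norm.norm (At j j) ^ 2 ≤ ∑ k, Norm.norm (At k j) ^ 2 :=
          Finset.single_le_sum (f := fun k => Norm.norm (At k j) ^ 2)
            (fun k _ => sq_nonneg _) (Finset.mem_univ j)
      _ ≤ 1 := hAcol j
  have hy1 : y ≤ 1 := by
    rw [hy]
    refine otoc_avg_le_one _ (fun j => ?_)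
    calc Norm.norm (Bt j j) ^ 2 ≤ ∑ k, Norm.norm (Bt k j) ^ 2 :=
          Finset.single_le_sum (f := fun k => Norm.norm (Bt k j) ^ 2)
            (fun k _ => sq_nonneg _) (Finset.mem_univ j)
      _ ≤ 1 := hBcol j
  have h1 : Norm.norm ((1 / (D : ℂ)) * ∑ j, ∑ k, Atᴴ j j * Btᴴ j k * At k k * Bt k j) ≤ x := by
    rw [norm_mul, habs1D, hx]
    refine mul_le_mul_of_nonneg_left ?_ hDpos
    calc Norm.norm (∑ j, ∑ k, Atᴴ j j * Btᴴ j k * At k k * Bt k j)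
        ≤ ∑ j, ∑ k, Norm.norm (Atᴴ j j * Btᴴ j k * At k k * Bt k j) :=
          (norm_sum_le _ _).trans
            (Finset.sum_le_sum fun j _ => norm_sum_le _ _)
      _ ≤ ∑ j, ∑ k, (Norm.norm (At j j) ^ 2 / 2 + Norm.norm (At k k) ^ 2 / 2) *
            Norm.norm (Bt k j) ^ 2 := by
          refine Finset.sum_le_sum fun j _ => Finset.sum_le_sum fun k _ => ?_
          rw [norm_mul, norm_mul, norm_mul, Matrix.conjTranspose_apply,
            Matrix.conjTranspose_apply, otoc_abs_star, otoc_abs_star]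
          nlinarith [mul_nonneg (sq_nonneg (Norm.norm (At j j) - Norm.norm (At k k)))
              (sq_nonneg (Norm.norm (Bt k j))),
            norm_nonneg (At j j), norm_nonneg (At k k),
            norm_nonneg (Bt k j)]
      _ ≤ ∑ j, Norm.norm (At j j) ^ 2 := otoc_key_sum _ _ hBcol hBrow
  have h2 : Norm.norm ((1 / (D : ℂ)) * ∑ j, ∑ k,
      (if j ≠ k then Atᴴ j k * Btᴴ k k * At k j * Bt j j else 0)) ≤ y := by
    rw [norm_mul, habs1D, hy]
    refine mul_le_mul_of_nonneg_left ?_ hDpos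
    calc Norm.norm (∑ j, ∑ k, (if j ≠ k then Atᴴ j k * Btᴴ k k * At k j * Bt j j else 0))
        ≤ ∑ j, ∑ k, Norm.norm ((if j ≠ k then Atᴴ j k * Btᴴ k k * At k j * Bt j j else 0)) :=
          (norm_sum_le _ _).trans
            (Finset.sum_le_sum fun j _ => norm_sum_le _ _)
      _ ≤ ∑ j, ∑ k, (Norm.norm (Bt j j) ^ 2 / 2 + Norm.norm (Bt k k) ^ 2 / 2) *
            Norm.norm (At k j) ^ 2 := by
          refine Finset.sum_le_sum fun j _ => Finset.sum_le_sum fun k _ => ?_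
          have hb : Norm.norm (Atᴴ j k * Btᴴ k k * At k j * Bt j j) ≤
              (Norm.norm (Bt j j) ^ 2 / 2 + Norm.norm (Bt k k) ^ 2 / 2) *
                Norm.norm (At k j) ^ 2 := by
            rw [norm_mul, norm_mul, norm_mul, Matrix.conjTranspose_apply,
              Matrix.conjTranspose_apply, otoc_abs_star, otoc_abs_star]
            nlinarith [mul_nonneg (sq_nonneg (Norm.norm (Bt j j) - Norm.norm (Bt k k)))
                (sq_nonneg (Norm.norm (At k j))),
              norm_nonneg (Bt j j), norm_nonneg (Bt k k),
              norm_nonneg (At k j)]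
          by_cases h : j ≠ k
          · rw [if_pos h]; exact hb
          · rw [if_neg h, norm_zero]; positivity
      _ ≤ ∑ j, Norm.norm (Bt j j) ^ 2 := otoc_key_sum _ _ hAcol hArow
  have hmax0 : 0 ≤ max x y := le_trans hx0 (le_max_left x y)
  have hstep : max x y ≤ Real.sqrt (max x y) := by
    have h : max x y ^ 2 ≤ max x y := by nlinarith [max_le hx1 hy1]
    calc max x y = Real.sqrt (max x y ^ 2) := (Real.sqrt_sq hmax0).symm
      _ ≤ Real.sqrt (max x y) := Real.sqrt_le_sqrt h
  calc Norm.norm ((1 / (D : ℂ)) * ∑ j, ∑ k, Atᴴ j j * Btᴴ j k * At k k * Bt k j +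
        (1 / (D : ℂ)) * ∑ j, ∑ k, (if j ≠ k then Atᴴ j k * Btᴴ k k * At k j * Bt j j else 0))
      ≤ Norm.norm ((1 / (D : ℂ)) * ∑ j, ∑ k, Atᴴ j j * Btᴴ j k * At k k * Bt k j) +
        Norm.norm ((1 / (D : ℂ)) * ∑ j, ∑ k,
          (if j ≠ k then Atᴴ j k * Btᴴ k k * At k j * Bt j j else 0)) := norm_add_le _ _
    _ ≤ x + y := add_le_add h1 h2
    _ ≤ 2 * max x y := by
        have ha := le_max_left x y; have hb := le_max_right x y; linarith
    _ ≤ 2 * Real.sqrt (max x y) := by linarith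

/-- For `H = U diag(E) U†` with non-degenerate gaps and `‖A‖, ‖B‖ ≤ 1`, the late-time OTOC
(Cesàro average of `tr(A†(t) B† A(t) B)/D`) converges to
`(1/D) Σ_{j,k} (A†)_{jj}(B†)_{jk}A_{kk}B_{kj} + (1/D) Σ_{j≠k} (A†)_{jk}(B†)_{kk}A_{kj}B_{jj}`
(matrix elements in the eigenbasis), whose absolute value is at most
`2·max((1/D)Σ_j|A_{jj}|², (1/D)Σ_j|B_{jj}|²)^{1/2}`. -/
theorem statement17 {D : ℕ} (H A B : Matrix (Fin D) (Fin D) ℂ)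
    (U : Matrix.unitaryGroup (Fin D) ℂ) (E : Fin D → ℝ)
    (hH : H = (U : Matrix (Fin D) (Fin D) ℂ) * Matrix.diagonal (fun j => (E j : ℂ)) *
      star (U : Matrix (Fin D) (Fin D) ℂ))
    (hgap : ∀ j k j' k' : Fin D, j ≠ k → E j - E k = E j' - E k' → j = j' ∧ k = k')
    (hA : ‖Matrix.toEuclideanCLM (𝕜 := ℂ) A‖ ≤ 1)
    (hB : ‖Matrix.toEuclideanCLM (𝕜 := ℂ) B‖ ≤ 1) :
    Tendsto (fun τ : ℝ => (τ : ℂ)⁻¹ * ∫ t in (0:ℝ)..τ,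
        ((NormedSpace.exp ((Complex.I * (t : ℂ)) • H) * Aᴴ *
            NormedSpace.exp ((-(Complex.I * (t : ℂ))) • H) * Bᴴ *
          (NormedSpace.exp ((Complex.I * (t : ℂ)) • H) * A *
            NormedSpace.exp ((-(Complex.I * (t : ℂ))) • H)) * B).trace) / (D : ℂ))
      atTop
      (nhds ((1 / (D : ℂ)) * ∑ j, ∑ k,
          ((star (U : Matrix (Fin D) (Fin D) ℂ) * A * (U : Matrix (Fin D) (Fin D) ℂ))ᴴ j j) *
          ((star (U : Matrix (Fin D) (Fin D) ℂ) * B * (U : Matrix (Fin D) (Fin D) ℂ))ᴴ j k) *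
          ((star (U : Matrix (Fin D) (Fin D) ℂ) * A * (U : Matrix (Fin D) (Fin D) ℂ)) k k) *
          ((star (U : Matrix (Fin D) (Fin D) ℂ) * B * (U : Matrix (Fin D) (Fin D) ℂ)) k j) +
        (1 / (D : ℂ)) * ∑ j, ∑ k, (if j ≠ k then
          ((star (U : Matrix (Fin D) (Fin D) ℂ) * A * (U : Matrix (Fin D) (Fin D) ℂ))ᴴ j k) *
          ((star (U : Matrix (Fin D) (Fin D) ℂ) * B * (U : Matrix (Fin D) (Fin D) ℂ))ᴴ k k) *
          ((star (U : Matrix (Fin D) (Fin D) ℂ) * A * (U : Matrix (Fin D) (Fin D) ℂ)) k j) *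
          ((star (U : Matrix (Fin D) (Fin D) ℂ) * B * (U : Matrix (Fin D) (Fin D) ℂ)) j j)
          else 0))) ∧
    Norm.norm ((1 / (D : ℂ)) * ∑ j, ∑ k,
          ((star (U : Matrix (Fin D) (Fin D) ℂ) * A * (U : Matrix (Fin D) (Fin D) ℂ))ᴴ j j) *
          ((star (U : Matrix (Fin D) (Fin D) ℂ) * B * (U : Matrix (Fin D) (Fin D) ℂ))ᴴ j k) *
          ((star (U : Matrix (Fin D) (Fin D) ℂ) * A * (U : Matrix (Fin D) (Fin D) ℂ)) k k) *
          ((star (U : Matrix (Fin D) (Fin D) ℂ) * B * (U : Matrix (Fin D) (Fin D) ℂ)) k j) +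
        (1 / (D : ℂ)) * ∑ j, ∑ k, (if j ≠ k then
          ((star (U : Matrix (Fin D) (Fin D) ℂ) * A * (U : Matrix (Fin D) (Fin D) ℂ))ᴴ j k) *
          ((star (U : Matrix (Fin D) (Fin D) ℂ) * B * (U : Matrix (Fin D) (Fin D) ℂ))ᴴ k k) *
          ((star (U : Matrix (Fin D) (Fin D) ℂ) * A * (U : Matrix (Fin D) (Fin D) ℂ)) k j) *
          ((star (U : Matrix (Fin D) (Fin D) ℂ) * B * (U : Matrix (Fin D) (Fin D) ℂ)) j j)
          else 0))
      ≤ 2 * Real.sqrt (max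
          ((1 / (D : ℝ)) * ∑ j, Norm.norm
            ((star (U : Matrix (Fin D) (Fin D) ℂ) * A * (U : Matrix (Fin D) (Fin D) ℂ)) j j) ^ 2)
          ((1 / (D : ℝ)) * ∑ j, Norm.norm
            ((star (U : Matrix (Fin D) (Fin D) ℂ) * B * (U : Matrix (Fin D) (Fin D) ℂ)) j j) ^ 2)) := by
  set V : Matrix (Fin D) (Fin D) ℂ := (U : Matrix (Fin D) (Fin D) ℂ) with hV
  have hV1 : star V * V = 1 := U.2.1
  have hV2 : V * star V = 1 := U.2.2
  set At : Matrix (Fin D) (Fin D) ℂ := star V * A * V with hAt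
  set Bt : Matrix (Fin D) (Fin D) ℂ := star V * B * V with hBt
  -- norm facts
  have hAtn : ‖Matrix.toEuclideanCLM (𝕜 := ℂ) At‖ ≤ 1 := otoc_conj_norm_le A U hA
  have hBtn : ‖Matrix.toEuclideanCLM (𝕜 := ℂ) Bt‖ ≤ 1 := otoc_conj_norm_le B U hB
  have hAcol : ∀ j, ∑ k, Norm.norm (At k j) ^ 2 ≤ 1 := otoc_col_sq_sum At hAtn
  have hBcol : ∀ j, ∑ k, Norm.norm (Bt k j) ^ 2 ≤ 1 := otoc_col_sq_sum Bt hBtn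
  have hArow : ∀ k, ∑ j, Norm.norm (At k j) ^ 2 ≤ 1 := by
    intro k
    have h := otoc_col_sq_sum Atᴴ (otoc_conjT_norm_le At hAtn) k
    calc ∑ j, Norm.norm (At k j) ^ 2 = ∑ j, Norm.norm (Atᴴ j k) ^ 2 := by
          apply Finset.sum_congr rfl; intro j _
          rw [Matrix.conjTranspose_apply, otoc_abs_star]
      _ ≤ 1 := h
  have hBrow : ∀ k, ∑ j, Norm.norm (Bt k j) ^ 2 ≤ 1 := by
    intro k
    have h := otoc_col_sq_sum Btᴴ (otoc_conjT_norm_le Bt hBtn) k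
    calc ∑ j, Norm.norm (Bt k j) ^ 2 = ∑ j, Norm.norm (Btᴴ j k) ^ 2 := by
          apply Finset.sum_congr rfl; intro j _
          rw [Matrix.conjTranspose_apply, otoc_abs_star]
      _ ≤ 1 := h
  constructor
  · -- the convergence statement
    set c : Fin D × Fin D × Fin D × Fin D → ℂ := fun p =>
      (Atᴴ p.1 p.2.1 * Btᴴ p.2.1 p.2.2.1 * At p.2.2.1 p.2.2.2 * Bt p.2.2.2 p.1) / (D : ℂ)
      with hc
    set θ : Fin D × Fin D × Fin D × Fin D → ℝ := fun p =>
      E p.1 - E p.2.1 + E p.2.2.1 - E p.2.2.2 with hθ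
    have hfun : ∀ t : ℝ,
        ((NormedSpace.exp ((Complex.I * (t : ℂ)) • H) * Aᴴ *
            NormedSpace.exp ((-(Complex.I * (t : ℂ))) • H) * Bᴴ *
          (NormedSpace.exp ((Complex.I * (t : ℂ)) • H) * A *
            NormedSpace.exp ((-(Complex.I * (t : ℂ))) • H)) * B).trace) / (D : ℂ) =
        ∑ i, c i * Complex.exp (Complex.I * t * θ i) := by
      intro t
      rw [hH]
      rw [otoc_trace_formula A B V hV1 hV2 E t]
      rw [Fintype.sum_prod_type]
      simp only [Finset.sum_div]
      apply Finset.sum_congr rfl; intro j _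
      rw [Fintype.sum_prod_type]
      apply Finset.sum_congr rfl; intro k _
      rw [Fintype.sum_prod_type]
      apply Finset.sum_congr rfl; intro l _
      apply Finset.sum_congr rfl; intro m _
      rw [hc, hθ]
      push_cast
      ring
    have hmain := otoc_cesaro_sum c θ
    have hfeq : (fun τ : ℝ => (τ : ℂ)⁻¹ * ∫ t in (0:ℝ)..τ,
        ∑ i, c i * Complex.exp (Complex.I * t * θ i)) =
        (fun τ : ℝ => (τ : ℂ)⁻¹ * ∫ t in (0:ℝ)..τ,
        ((NormedSpace.exp ((Complex.I * (t : ℂ)) • H) * Aᴴ *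
            NormedSpace.exp ((-(Complex.I * (t : ℂ))) • H) * Bᴴ *
          (NormedSpace.exp ((Complex.I * (t : ℂ)) • H) * A *
            NormedSpace.exp ((-(Complex.I * (t : ℂ))) • H)) * B).trace) / (D : ℂ)) := by
      funext τ
      congr 1
      apply intervalIntegral.integral_congr
      intro t _
      exact (hfun t).symm
    rw [hfeq] at hmain
    have hlim : (∑ i, if θ i = 0 then c i else 0) =
        (1 / (D : ℂ)) * ∑ j, ∑ k, Atᴴ j j * Btᴴ j k * At k k * Bt k j +
        (1 / (D : ℂ)) * ∑ j, ∑ k,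
          (if j ≠ k then Atᴴ j k * Btᴴ k k * At k j * Bt j j else 0) := by
      rw [← otoc_limit_eq At Bt E hgap]
      rw [Fintype.sum_prod_type]
      apply Finset.sum_congr rfl; intro j _
      rw [Fintype.sum_prod_type]
      apply Finset.sum_congr rfl; intro k _
      rw [Fintype.sum_prod_type]
    rw [hlim] at hmain
    exact hmain
  · exact otoc_bound_lemma At Bt hAcol hArow hBcol hBrow
end
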